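/- arXiv:2603.29566 — 2 statements merged into one kernel-verified Lean document; each statement's English description precedes it below -/
import Mathlib

section
/- Fix a group element g_k in a finite group G of order n, and regard the entries θ(g_1),…,θ(g_n) as independent polynomial indeterminates. Then in the expansion of det(Mat_θ) as a polynomial in these indeterminates, the monomial θ(g_k)^n appears with coefficient ±1; in particular det(Mat_θ) is a nonzero polynomial, so the condition det(θ) ≠ 0 is generic (holds on a Zariski-dense subset of K^n for an infinite field K of characteristic 0). -/
open Finset MvPolynomial

/-- The circulant matrix of a filter. -/
def Mat {G : Type*} [Group G] [Fintype G] {S : Type*} [CommRing S] (θ : G → S) :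
    Matrix G G S :=
  Matrix.of fun i j => θ (i * j⁻¹)

lemma prod_X_eq_monomial {G : Type*} [DecidableEq G] (K : Type*) [CommRing K]
    (f : G → G) (s : Finset G) :
    (∏ i ∈ s, (MvPolynomial.X (f i) : MvPolynomial G K)) =
      MvPolynomial.monomial (∑ i ∈ s, Finsupp.single (f i) 1) 1 := by
  induction s using Finset.induction with
  | empty => simp
  | insert _ _ h ih =>
      rw [Finset.prod_insert h, Finset.sum_insert h, ih, MvPolynomial.X,
        MvPolynomial.monomial_mul, one_mul]

/-- With the entries of `θ` regarded as independent indeterminates, the monomial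
`θ(g_k)^n` appears in `det(Mat θ)` with coefficient `±1`; in particular the
determinant is a nonzero polynomial. -/
theorem det_circulant_symbolically_nonzero
    {G : Type*} [Group G] [Fintype G] [DecidableEq G]
    (K : Type*) [Field K] [CharZero K] (k : G) :
    (MvPolynomial.coeff (Finsupp.single k (Fintype.card G))
        (Mat fun g => (MvPolynomial.X g : MvPolynomial G K)).det = 1 ∨
     MvPolynomial.coeff (Finsupp.single k (Fintype.card G))
        (Mat fun g => (MvPolynomial.X g : MvPolynomial G K)).det = -1) ∧
    (Mat fun g => (MvPolynomial.X g : MvPolynomial G K)).det ≠ 0 := by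
  classical
  set σ₀ : Equiv.Perm G := Equiv.mulLeft k with hσ₀
  have key : MvPolynomial.coeff (Finsupp.single k (Fintype.card G))
      (Mat fun g => (MvPolynomial.X g : MvPolynomial G K)).det
      = Equiv.Perm.sign σ₀ • (1 : K) := by
    rw [Matrix.det_apply, MvPolynomial.coeff_sum]
    rw [Finset.sum_eq_single σ₀]
    · rw [MvPolynomial.coeff_smul]
      congr 1
      simp only [Mat, Matrix.of_apply]
      rw [prod_X_eq_monomial, MvPolynomial.coeff_monomial, if_pos]
      have : ∀ i : G, σ₀ i * i⁻¹ = k := by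
        intro i; simp [hσ₀, mul_assoc]
      simp only [this, Finset.sum_const, Finset.card_univ, Finsupp.smul_single,
        smul_eq_mul, mul_one]
    · intro σ _ hσ
      rw [MvPolynomial.coeff_smul]
      simp only [Mat, Matrix.of_apply]
      rw [prod_X_eq_monomial, MvPolynomial.coeff_monomial, if_neg, smul_zero]
      intro h
      apply hσ
      ext i
      by_contra hi
      have hne : σ i * i⁻¹ ≠ k := by
        intro hik
        apply hi
        have : σ i = k * i := by
          rw [← hik]; group
        simp [this, hσ₀]
      have := DFunLike.congr_fun h (σ i * i⁻¹)
      rw [Finsupp.finset_sum_apply] at this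
      rw [Finsupp.single_apply, if_neg (fun hh => hne hh.symm)] at this
      rw [Finset.sum_eq_zero_iff] at this
      have := this i (Finset.mem_univ i)
      simp [Finsupp.single_apply] at this
    · intro h; exact absurd (Finset.mem_univ σ₀) h
  rcases Int.units_eq_one_or (Equiv.Perm.sign σ₀) with h | h <;>
    rw [h] at key <;> simp only [one_smul, Units.neg_smul, neg_neg] at key
  · rw [key]
    exact ⟨Or.inl rfl, fun h0 => by rw [h0, MvPolynomial.coeff_zero] at key; exact one_ne_zero key.symm⟩
  · rw [key]
    refine ⟨Or.inr (by simp), fun h0 => ?_⟩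
    rw [h0, MvPolynomial.coeff_zero] at key
    simp at key
end

section
/- Let G be a finite group, K a field, and L ≥ 1, r ≥ 1. For nonzero scalars λ_1,…,λ_{L-1} ∈ K and filters θ = (θ_1,…,θ_L) ∈ K[G]^L, define ψ = (λ_1 θ_1, λ_1^{-r} λ_2 θ_2, …, λ_{L-2}^{-r} λ_{L-1} θ_{L-1}, λ_{L-1}^{-r} θ_L). Then the PGCNN functions agree: Φ_θ = Φ_ψ, where Φ_θ(x) = σ_r(⋯σ_r(σ_r(x ∗ θ_1) ∗ θ_2) ⋯ ∗ θ_{L-1}) ∗ θ_L and σ_r is the componentwise r-th power. -/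
set_option linter.unusedSectionVars false
set_option linter.unusedVariables false

open Finset

variable {G : Type*} [Group G] [Fintype G] [DecidableEq G]
variable {K : Type*} [Field K]

/-- Convolution in the group algebra `K[G]`. -/
def conv {G : Type*} [Group G] [Fintype G] (θ ψ : G → K) : G → K :=
  fun g => ∑ h : G, θ (g * h⁻¹) * ψ h

/-- The forward pass of a PGCNN: the `r`-th power activation is applied after each
layer except the last one. -/
def fwd {G : Type*} [Group G] [Fintype G] (r : ℕ) : List (G → K) → (G → K) → (G → K)
  | [], x => x
  | [t], x => conv x t
  | t :: s :: ts, x => fwd r (s :: ts) (fun g => (conv x t g) ^ r)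

lemma conv_mul_left (c : K) (x t : G → K) (g : G) :
    conv x (fun g => c * t g) g = c * conv x t g := by
  simp only [conv, Finset.mul_sum]
  exact Finset.sum_congr rfl fun h _ => by ring

lemma fwd_scale (r : ℕ) (c : K) (hc : c ≠ 0) (s : G → K) (ts : List (G → K)) (x : G → K) :
    fwd r ((fun g => c⁻¹ * s g) :: ts) (fun g => c * x g) = fwd r (s :: ts) x := by
  have h : (conv (fun g => c * x g) (fun g => c⁻¹ * s g)) = conv x s := by
    funext g
    simp only [conv]
    refine Finset.sum_congr rfl fun h _ => ?_
    field_simp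
  cases ts with
  | nil => simp only [fwd, h]
  | cons u ts => simp only [fwd, h]

lemma fwd_ofFn_cons {M : ℕ} (r : ℕ) (f : Fin (M + 2) → G → K) (x : G → K) :
    fwd r (List.ofFn f) x
      = fwd r (List.ofFn fun i : Fin (M + 1) => f i.succ)
          (fun g => (conv x (f 0) g) ^ r) := by
  rw [List.ofFn_succ (f := f), List.ofFn_succ (f := fun i : Fin (M + 1) => f i.succ)]
  rfl

/-- The rescaled filters. -/
def scaled (L r : ℕ) (θ : Fin L → G → K) (lam : Fin (L - 1) → K) : Fin L → G → K :=
  fun i => fun g =>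
    (if h : (i : ℕ) < L - 1 then lam ⟨i, h⟩ else 1) *
    (if h : 0 < (i : ℕ) then
        ((lam ⟨(i : ℕ) - 1, by have := i.isLt; omega⟩)⁻¹) ^ r else 1) *
    θ i g

theorem pgcnn_aux (r : ℕ) :
    ∀ L : ℕ, ∀ (θ : Fin L → G → K) (lam : Fin (L - 1) → K), (∀ i, lam i ≠ 0) →
      ∀ x, fwd r (List.ofFn θ) x = fwd r (List.ofFn (scaled L r θ lam)) x := by
  intro L
  induction L with
  | zero => intro θ lam _ x; rfl
  | succ n ih =>
    cases n with
    | zero =>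
      intro θ lam _ x
      have h : scaled 1 r θ lam = θ := by
        funext i g
        have hi := i.isLt
        have h0 : (i : ℕ) = 0 := by omega
        simp [scaled, h0]
      rw [h]
    | succ M =>
      intro θ lam hlam x
      have c0 : lam ⟨0, by omega⟩ ≠ 0 := hlam _
      rw [fwd_ofFn_cons r θ x, fwd_ofFn_cons r (scaled (M + 2) r θ lam) x]
      have hA : (fun g => (conv x (scaled (M + 2) r θ lam 0) g) ^ r)
          = (fun g => (lam ⟨0, by omega⟩) ^ r * ((conv x (θ 0) g) ^ r)) := by
        have h0 : scaled (M + 2) r θ lam 0 = fun g => lam ⟨0, by omega⟩ * θ 0 g := by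
          funext g
          unfold scaled
          beta_reduce
          rw [dif_pos (show ((0 : Fin (M + 2)) : ℕ) < M + 2 - 1 by simp),
            dif_neg (show ¬ 0 < ((0 : Fin (M + 2)) : ℕ) by simp),
            mul_one]
          rfl
        funext g
        rw [h0, conv_mul_left, mul_pow]
      have hlist : (List.ofFn fun i : Fin (M + 1) => scaled (M + 2) r θ lam i.succ)
          = (fun g => ((lam ⟨0, by omega⟩) ^ r)⁻¹ *
                scaled (M + 1) r (fun i : Fin (M + 1) => θ i.succ)
                  (fun i : Fin M => lam i.succ) 0 g)
            :: List.ofFn (fun i : Fin M =>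
                scaled (M + 1) r (fun i : Fin (M + 1) => θ i.succ)
                  (fun i : Fin M => lam i.succ) i.succ) := by
        rw [List.ofFn_succ]
        congr 1
        · funext g
          unfold scaled
          beta_reduce
          by_cases hM : 0 < M
          · rw [dif_pos (show ((Fin.succ (0 : Fin (M + 1))) : ℕ) < M + 2 - 1 by simp; omega),
              dif_pos (show 0 < ((Fin.succ (0 : Fin (M + 1))) : ℕ) by simp),
              dif_pos (show ((0 : Fin (M + 1)) : ℕ) < M + 1 - 1 by simp; omega),
              dif_neg (show ¬ 0 < ((0 : Fin (M + 1)) : ℕ) by simp)]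
            show lam ⟨1, by omega⟩ * ((lam ⟨0, by omega⟩)⁻¹) ^ r * θ 1 g
              = ((lam ⟨0, by omega⟩) ^ r)⁻¹ * (lam ⟨1, by omega⟩ * 1 * θ 1 g)
            rw [inv_pow]
            ring
          · rw [dif_neg (show ¬ ((Fin.succ (0 : Fin (M + 1))) : ℕ) < M + 2 - 1 by simp; omega),
              dif_pos (show 0 < ((Fin.succ (0 : Fin (M + 1))) : ℕ) by simp),
              dif_neg (show ¬ ((0 : Fin (M + 1)) : ℕ) < M + 1 - 1 by simp; omega),
              dif_neg (show ¬ 0 < ((0 : Fin (M + 1)) : ℕ) by simp)]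
            show 1 * ((lam ⟨0, by omega⟩)⁻¹) ^ r * θ 1 g
              = ((lam ⟨0, by omega⟩) ^ r)⁻¹ * (1 * 1 * θ 1 g)
            rw [inv_pow]
            ring
        · congr 1
          funext i g
          have hi := i.isLt
          simp only [scaled, Fin.val_succ]
          by_cases h : (i : ℕ) + 1 < M
          · rw [dif_pos (show (i:ℕ) + 1 + 1 < M + 2 - 1 by omega),
              dif_pos (show (0:ℕ) < (i:ℕ) + 1 + 1 by omega),
              dif_pos (show (i:ℕ) + 1 < M + 1 - 1 by omega),
              dif_pos (show (0:ℕ) < (i:ℕ) + 1 by omega)]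
            rfl
          · rw [dif_neg (show ¬ (i:ℕ) + 1 + 1 < M + 2 - 1 by omega),
              dif_pos (show (0:ℕ) < (i:ℕ) + 1 + 1 by omega),
              dif_neg (show ¬ (i:ℕ) + 1 < M + 1 - 1 by omega),
              dif_pos (show (0:ℕ) < (i:ℕ) + 1 by omega)]
            rfl
      rw [hA, hlist,
        fwd_scale r ((lam ⟨0, by omega⟩) ^ r) (pow_ne_zero r c0) _ _
          (fun g => (conv x (θ 0) g) ^ r),
        ← List.ofFn_succ]
      exact ih (fun i : Fin (M + 1) => θ i.succ) (fun i : Fin M => lam i.succ)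
        (fun i => hlam i.succ) (fun g => (conv x (θ 0) g) ^ r)

/-- Scaling invariance of the PGCNN parametrization: rescaling layer `l` by `λ_l` and
layer `l+1` by `λ_l^{-r}` (combined with its own scaling) leaves the network function
unchanged. -/
theorem pgcnn_scaling_invariance (L r : ℕ) (hL : 1 ≤ L) (hr : 1 ≤ r)
    (θ : Fin L → G → K) (lam : Fin (L - 1) → K) (hlam : ∀ i, lam i ≠ 0)
    (ψ : Fin L → G → K)
    (hψ : ∀ i : Fin L, ψ i = fun g =>
      (if h : (i : ℕ) < L - 1 then lam ⟨i, h⟩ else 1) *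
      (if h : 0 < (i : ℕ) then
          ((lam ⟨(i : ℕ) - 1, by have := i.isLt; omega⟩)⁻¹) ^ r else 1) *
      θ i g) :
    ∀ x : G → K, fwd r (List.ofFn θ) x = fwd r (List.ofFn ψ) x := by
  have h : ψ = scaled L r θ lam := by
    funext i
    rw [hψ i]
    rfl
  rw [h]
  exact pgcnn_aux r L θ lam hlam
end
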